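/- Let P = Conv((0,0), (1,1), (0,3)) ⊂ ℝ^2. Then codeg(P) = 2, and the adjoint polytope (2P)^{(1)} equals Conv((1,2), (1,3), (4/3, 7/3)), which is not a lattice polytope. -/
import Mathlib


open Set Pointwise

noncomputable section

/-- A point of `ℝ²` is a lattice point if all its coordinates are integers. -/
def IsLatticePoint {n : ℕ} (x : Fin n → ℝ) : Prop := ∀ i, ∃ z : ℤ, x i = (z : ℝ)

/-- The codegree of a polytope `P ⊆ ℝⁿ`: the least positive integer `k` such that the
interior of `kP` contains a lattice point. -/
def codegree (n : ℕ) (P : Set (Fin n → ℝ)) : ℕ :=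
  sInf {k : ℕ | 0 < k ∧ ∃ x ∈ interior ((k : ℝ) • P), IsLatticePoint x}

lemma mem_triangle {a b c x : Fin 2 → ℝ} {l1 l2 l3 : ℝ}
    (h1 : 0 ≤ l1) (h2 : 0 ≤ l2) (h3 : 0 ≤ l3) (hs : l1 + l2 + l3 = 1)
    (hx : l1 • a + l2 • b + l3 • c = x) :
    x ∈ convexHull ℝ ({a, b, c} : Set (Fin 2 → ℝ)) := by
  have key := Finset.centerMass_mem_convexHull (t := (Finset.univ : Finset (Fin 3)))
    (w := ![l1, l2, l3]) (z := ![a, b, c]) (s := ({a, b, c} : Set (Fin 2 → ℝ)))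
    (by intro i _; fin_cases i <;> simpa using ‹_›)
    (by simp [Fin.sum_univ_three, hs])
    (by intro i _; fin_cases i <;> simp)
  have : Finset.univ.centerMass ![l1, l2, l3] ![a, b, c] = x := by
    rw [Finset.centerMass]
    simp [Fin.sum_univ_three, hs, hx]
  rwa [this] at key

lemma part2 : convexHull ℝ {(![0, 0] : Fin 2 → ℝ), ![1, 1], ![0, 3]} =
      {x : Fin 2 → ℝ | x 0 ≥ 0 ∧ -x 0 + x 1 ≥ 0 ∧ -2 * x 0 - x 1 ≥ -3} := by
  apply le_antisymm
  · apply convexHull_min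
    · rintro x (rfl | rfl | rfl) <;> norm_num
    · intro x hx y hy a b ha hb hab
      simp only [mem_setOf_eq, Pi.add_apply, Pi.smul_apply, smul_eq_mul] at *
      refine ⟨by nlinarith [hx.1, hy.1], by nlinarith [hx.2.1, hy.2.1],
        by nlinarith [hx.2.2, hy.2.2]⟩
  · intro x hx
    obtain ⟨h1, h2, h3⟩ := hx
    refine mem_triangle (l1 := (3 - 2 * x 0 - x 1) / 3) (l2 := x 0) (l3 := (x 1 - x 0) / 3)
      (by linarith) (by linarith) (by linarith) (by ring) ?_
    funext i
    fin_cases i <;> simp <;> ring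

lemma part4 : {x : Fin 2 → ℝ | x 0 ≥ 1 ∧ -x 0 + x 1 ≥ 1 ∧ -2 * x 0 - x 1 ≥ -5} =
      convexHull ℝ {(![1, 2] : Fin 2 → ℝ), ![1, 3], ![4 / 3, 7 / 3]} := by
  apply le_antisymm
  · intro x hx
    obtain ⟨h1, h2, h3⟩ := hx
    refine mem_triangle (l1 := 5 - 2 * x 0 - x 1) (l2 := x 1 - x 0 - 1) (l3 := 3 * x 0 - 3)
      (by linarith) (by linarith) (by linarith) (by ring) ?_
    funext i
    fin_cases i <;> simp <;> ring
  · apply convexHull_min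
    · rintro x (rfl | rfl | rfl) <;> norm_num
    · intro x hx y hy a b ha hb hab
      simp only [mem_setOf_eq, Pi.add_apply, Pi.smul_apply, smul_eq_mul] at *
      refine ⟨by nlinarith [hx.1, hy.1], by nlinarith [hx.2.1, hy.2.1],
        by nlinarith [hx.2.2, hy.2.2]⟩

lemma part3 : (2 : ℝ) • convexHull ℝ {(![0, 0] : Fin 2 → ℝ), ![1, 1], ![0, 3]} =
      {x : Fin 2 → ℝ | x 0 ≥ 0 ∧ -x 0 + x 1 ≥ 0 ∧ -2 * x 0 - x 1 ≥ -6} := by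
  rw [part2]
  ext x
  rw [mem_smul_set_iff_inv_smul_mem₀ (two_ne_zero)]
  simp only [mem_setOf_eq, Pi.smul_apply, smul_eq_mul]
  constructor
  · rintro ⟨a, b, c⟩
    refine ⟨by linarith, by linarith, by linarith⟩
  · rintro ⟨a, b, c⟩
    refine ⟨by linarith, by linarith, by linarith⟩

lemma strict_of_interior {x : Fin 2 → ℝ}
    (hx : x ∈ interior {x : Fin 2 → ℝ | x 0 ≥ 0 ∧ -x 0 + x 1 ≥ 0 ∧ -2 * x 0 - x 1 ≥ -3}) :
    x 0 > 0 ∧ -x 0 + x 1 > 0 := by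
  set g : ℝ → (Fin 2 → ℝ) := fun t => x + t • (![1, 0] : Fin 2 → ℝ) with hg
  have hgc : Continuous g := by fun_prop
  have hg0 : g 0 = x := by
    show x + (0:ℝ) • _ = x
    rw [zero_smul, add_zero]
  have hmem : g ⁻¹' (interior {x : Fin 2 → ℝ | x 0 ≥ 0 ∧ -x 0 + x 1 ≥ 0 ∧ -2 * x 0 - x 1 ≥ -3})
      ∈ nhds (0 : ℝ) :=
    (isOpen_interior.preimage hgc).mem_nhds (by rw [mem_preimage, hg0]; exact hx)
  obtain ⟨ε, hε, hball⟩ := Metric.mem_nhds_iff.mp hmem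
  have hco : ∀ t : ℝ, (g t) 0 = x 0 + t ∧ (g t) 1 = x 1 := by
    intro t
    constructor
    · show (x + t • (![1, 0] : Fin 2 → ℝ)) 0 = _
      simp
    · show (x + t • (![1, 0] : Fin 2 → ℝ)) 1 = _
      simp
  have key : ∀ t : ℝ, |t| < ε → (x 0 + t ≥ 0 ∧ -(x 0 + t) + x 1 ≥ 0) := by
    intro t ht
    have : g t ∈ interior {x : Fin 2 → ℝ | x 0 ≥ 0 ∧ -x 0 + x 1 ≥ 0 ∧ -2 * x 0 - x 1 ≥ -3} :=
      hball (by simpa [Real.dist_eq] using ht)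
    have := interior_subset this
    obtain ⟨a, b, _⟩ := this
    rw [(hco t).1] at a
    rw [(hco t).1, (hco t).2] at b
    exact ⟨a, by linarith⟩
  have h1 := key (-(ε/2)) (by rw [abs_neg, abs_of_pos (by linarith)]; linarith)
  have h2 := key (ε/2) (by rw [abs_of_pos (by linarith)]; linarith)
  constructor <;> [linarith [h1.1]; linarith [h2.2]]

lemma mem_int6 : (![1, 2] : Fin 2 → ℝ) ∈
    interior {x : Fin 2 → ℝ | x 0 ≥ 0 ∧ -x 0 + x 1 ≥ 0 ∧ -2 * x 0 - x 1 ≥ -6} := by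
  apply mem_interior.mpr
  refine ⟨{x : Fin 2 → ℝ | 0 < x 0 ∧ 0 < -x 0 + x 1 ∧ -6 < -2 * x 0 - x 1}, ?_, ?_, ?_⟩
  · intro x hx
    exact ⟨le_of_lt hx.1, le_of_lt hx.2.1, le_of_lt hx.2.2⟩
  · apply IsOpen.inter
    · exact isOpen_lt continuous_const (continuous_apply 0)
    · apply IsOpen.inter
      · exact isOpen_lt continuous_const
          (show Continuous fun x : Fin 2 → ℝ => -x 0 + x 1 by fun_prop)
      · exact isOpen_lt continuous_const
          (show Continuous fun x : Fin 2 → ℝ => -2 * x 0 - x 1 by fun_prop)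
  · norm_num

lemma part1 : codegree 2 (convexHull ℝ {(![0, 0] : Fin 2 → ℝ), ![1, 1], ![0, 3]}) = 2 := by
  set P := convexHull ℝ {(![0, 0] : Fin 2 → ℝ), ![1, 1], ![0, 3]} with hP
  have h2mem : 2 ∈ {k : ℕ | 0 < k ∧ ∃ x ∈ interior ((k : ℝ) • P), IsLatticePoint x} := by
    refine ⟨by norm_num, ![1, 2], ?_, ?_⟩
    · have : ((2 : ℕ) : ℝ) • P = (2 : ℝ) • P := by norm_num
      rw [this, hP, part3]
      exact mem_int6
    · intro i
      fin_cases i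
      · exact ⟨1, by norm_num⟩
      · exact ⟨2, by norm_num⟩
  apply le_antisymm
  · exact Nat.sInf_le h2mem
  · apply le_csInf ⟨2, h2mem⟩
    rintro b ⟨hb, x, hxint, hlat⟩
    by_contra hlt
    push_neg at hlt
    interval_cases b
    have : ((1 : ℕ) : ℝ) • P = P := by norm_num
    rw [this, hP, part2] at hxint
    obtain ⟨hs1, hs2⟩ := strict_of_interior hxint
    have hmem := interior_subset hxint
    obtain ⟨_, _, hw3⟩ := hmem
    obtain ⟨z0, hz0⟩ := hlat 0
    obtain ⟨z1, hz1⟩ := hlat 1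
    rw [hz0] at hs1 hs2 hw3
    rw [hz1] at hs2 hw3
    have i1 : (0 : ℤ) < z0 := by exact_mod_cast hs1
    have i2 : (z0 : ℤ) < z1 := by
      have : (z0 : ℝ) < z1 := by linarith
      exact_mod_cast this
    have i3 : (-2 * z0 - z1 : ℤ) ≥ -3 := by
      have : (-2 * (z0:ℝ) - z1 : ℝ) ≥ -3 := by linarith
      exact_mod_cast this
    omega

lemma part5 : ¬ ∃ V : Finset (Fin 2 → ℤ),
      convexHull ℝ {(![1, 2] : Fin 2 → ℝ), ![1, 3], ![4 / 3, 7 / 3]} =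
        convexHull ℝ ((fun v : Fin 2 → ℤ => fun i => (v i : ℝ)) '' (V : Set (Fin 2 → ℤ))) := by
  rintro ⟨V, hV⟩
  have himg : (fun v : Fin 2 → ℤ => fun i => (v i : ℝ)) '' (V : Set (Fin 2 → ℤ)) ⊆
      {x : Fin 2 → ℝ | x 0 = 1} := by
    rintro _ ⟨v, hv, rfl⟩
    have hsub : (fun v : Fin 2 → ℤ => fun i => (v i : ℝ)) '' (V : Set (Fin 2 → ℤ)) ⊆
        convexHull ℝ ((fun v : Fin 2 → ℤ => fun i => (v i : ℝ)) '' (V : Set (Fin 2 → ℤ))) :=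
      subset_convexHull ℝ _
    have : (fun i => ((v i : ℝ))) ∈
        {x : Fin 2 → ℝ | x 0 ≥ 1 ∧ -x 0 + x 1 ≥ 1 ∧ -2 * x 0 - x 1 ≥ -5} := by
      rw [part4, hV]
      exact hsub ⟨v, hv, rfl⟩
    simp only [mem_setOf_eq] at this
    obtain ⟨a, b, c⟩ := this
    simp only [mem_setOf_eq]
    have i1 : (1 : ℤ) ≤ v 0 := by exact_mod_cast a
    have i2 : (v 0 : ℤ) + 1 ≤ v 1 := by
      have : (v 0 : ℝ) + 1 ≤ v 1 := by linarith
      exact_mod_cast this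
    have i3 : (-2 * v 0 - v 1 : ℤ) ≥ -5 := by
      have : (-2 * (v 0 : ℝ) - v 1 : ℝ) ≥ -5 := by linarith
      exact_mod_cast this
    have : v 0 = 1 := by omega
    rw [this]; norm_num
  have hconv : Convex ℝ {x : Fin 2 → ℝ | x 0 = 1} := by
    intro x hx y hy a b ha hb hab
    simp only [mem_setOf_eq, Pi.add_apply, Pi.smul_apply, smul_eq_mul] at *
    rw [hx, hy]; linarith
  have hhull := convexHull_min himg hconv
  have hpt : (![4 / 3, 7 / 3] : Fin 2 → ℝ) ∈
      convexHull ℝ {(![1, 2] : Fin 2 → ℝ), ![1, 3], ![4 / 3, 7 / 3]} :=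
    subset_convexHull ℝ _ (by simp)
  rw [hV] at hpt
  have := hhull hpt
  simp only [mem_setOf_eq] at this
  norm_num at this

/-- Let `P = Conv((0,0), (1,1), (0,3)) ⊆ ℝ²`, with facet presentation
`P = {x ≥ 0, -x + y ≥ 0, -2x - y ≥ -3}` (primitive inner normals).  Then `codeg(P) = 2`,
`2P = {x ≥ 0, -x + y ≥ 0, -2x - y ≥ -6}`, and the adjoint polytope
`(2P)^{(1)} = {x ≥ 1, -x + y ≥ 1, -2x - y ≥ -5}` equals
`Conv((1,2), (1,3), (4/3, 7/3))`, which is not a lattice polytope. -/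
theorem nonsmooth_adjoint_not_lattice :
    codegree 2 (convexHull ℝ {(![0, 0] : Fin 2 → ℝ), ![1, 1], ![0, 3]}) = 2 ∧
    (convexHull ℝ {(![0, 0] : Fin 2 → ℝ), ![1, 1], ![0, 3]} =
      {x : Fin 2 → ℝ | x 0 ≥ 0 ∧ -x 0 + x 1 ≥ 0 ∧ -2 * x 0 - x 1 ≥ -3}) ∧
    ((2 : ℝ) • convexHull ℝ {(![0, 0] : Fin 2 → ℝ), ![1, 1], ![0, 3]} =
      {x : Fin 2 → ℝ | x 0 ≥ 0 ∧ -x 0 + x 1 ≥ 0 ∧ -2 * x 0 - x 1 ≥ -6}) ∧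
    ({x : Fin 2 → ℝ | x 0 ≥ 1 ∧ -x 0 + x 1 ≥ 1 ∧ -2 * x 0 - x 1 ≥ -5} =
      convexHull ℝ {(![1, 2] : Fin 2 → ℝ), ![1, 3], ![4 / 3, 7 / 3]}) ∧
    ¬ ∃ V : Finset (Fin 2 → ℤ),
      convexHull ℝ {(![1, 2] : Fin 2 → ℝ), ![1, 3], ![4 / 3, 7 / 3]} =
        convexHull ℝ ((fun v : Fin 2 → ℤ => fun i => (v i : ℝ)) '' (V : Set (Fin 2 → ℤ))) :=
  ⟨part1, part2, part3, part4, part5⟩
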